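/- Let R ⊆ ℕ be sparse, enumerated by (r_n), and let A be an operator with A > 0 cofinitely on R. Then there exists a rational r > 1 such that A(n+1) > r · A(n) for all sufficiently large n. In particular, the sequence n ↦ A(n) is eventually strictly increasing. -/

import Mathlib

open Filter

/-- `opApp a k r n = Σ_{i=0}^{k} a_i · r(n+i)`. -/
def opApp (a : ℕ → ℤ) (k : ℕ) (r : ℕ → ℕ) (n : ℕ) : ℤ :=
  ∑ i ∈ Finset.range (k + 1), a i * (r (n + i) : ℤ)

/-- Sparsity: trichotomy (S1) and condition (S2). -/
def IsSparse (r : ℕ → ℕ) : Prop :=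
  ∀ (a : ℕ → ℤ) (k : ℕ),
    ((∀ n, opApp a k r n = 0) ∨ (∀ᶠ n in atTop, 0 < opApp a k r n) ∨
      (∀ᶠ n in atTop, opApp a k r n < 0)) ∧
    ((∀ᶠ n in atTop, 0 < opApp a k r n) → ∃ Δ : ℕ, ∀ n, (r n : ℤ) < opApp a k r (n + Δ))

namespace SparseAux

def pad (a : ℕ → ℤ) (k : ℕ) : ℕ → ℤ := fun i => if i ≤ k then a i else 0
def sh (a : ℕ → ℤ) : ℕ → ℤ := fun i => if i = 0 then 0 else a (i - 1)

lemma pad_sum (a : ℕ → ℤ) (k : ℕ) (r : ℕ → ℕ) (n : ℕ) :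
    ∑ i ∈ Finset.range (k + 1 + 1), pad a k i * (r (n + i) : ℤ)
      = ∑ i ∈ Finset.range (k + 1), a i * (r (n + i) : ℤ) := by
  rw [← Finset.sum_subset (Finset.range_subset_range.2 (by omega : k + 1 ≤ k + 1 + 1))]
  · refine Finset.sum_congr rfl fun i hi => ?_
    have : i ≤ k := by simpa [Nat.lt_succ_iff] using hi
    simp [pad, this]
  · intro i hi hni
    simp only [Finset.mem_range] at hi hni
    have : ¬ i ≤ k := by omega
    simp [pad, this]

lemma sh_sum (a : ℕ → ℤ) (k : ℕ) (r : ℕ → ℕ) (n : ℕ) :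
    ∑ i ∈ Finset.range (k + 1 + 1), sh a i * (r (n + i) : ℤ)
      = ∑ i ∈ Finset.range (k + 1), a i * (r (n + 1 + i) : ℤ) := by
  rw [Finset.sum_range_succ' (fun i => sh a i * (r (n + i) : ℤ)) (k + 1)]
  have h0 : sh a 0 * (r (n + 0) : ℤ) = 0 := by simp [sh]
  rw [h0, add_zero]
  apply Finset.sum_congr rfl
  intro i hi
  simp only [sh]
  rw [if_neg (by omega : ¬ i + 1 = 0)]
  simp only [Nat.add_sub_cancel]
  rw [show n + (i + 1) = n + 1 + i by omega]

lemma comb_app (a : ℕ → ℤ) (k : ℕ) (r : ℕ → ℕ) (c d : ℤ) (n : ℕ) :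
    opApp (fun i => c * sh a i - d * pad a k i) (k + 1) r n
      = c * opApp a k r (n + 1) - d * opApp a k r n := by
  unfold opApp
  simp only [sub_mul, mul_assoc]
  rw [Finset.sum_sub_distrib, ← Finset.mul_sum, ← Finset.mul_sum, sh_sum, pad_sum]

lemma opApp_le_bound (a : ℕ → ℤ) (k : ℕ) (r : ℕ → ℕ) (hmono : StrictMono r) (n : ℕ) :
    opApp a k r n ≤ (∑ i ∈ Finset.range (k + 1), |a i|) * (r (n + k) : ℤ) := by
  unfold opApp
  rw [Finset.sum_mul]
  refine Finset.sum_le_sum fun i hi => ?_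
  have hik : i ≤ k := by simpa [Nat.lt_succ_iff] using hi
  have h1 : a i * (r (n + i) : ℤ) ≤ |a i| * (r (n + i) : ℤ) :=
    mul_le_mul_of_nonneg_right (le_abs_self _) (by positivity)
  refine h1.trans (mul_le_mul_of_nonneg_left ?_ (abs_nonneg _))
  exact_mod_cast hmono.monotone (by omega : n + i ≤ n + k)

lemma abs_partial_bound (a : ℕ → ℤ) (k : ℕ) (r : ℕ → ℕ) (hmono : StrictMono r)
    (k' : ℕ) (m j : ℕ) (hj : ∀ i, i < k' → m + i ≤ j) (hk' : k' ≤ k) :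
    |∑ i ∈ Finset.range k', a i * (r (m + i) : ℤ)|
      ≤ (∑ i ∈ Finset.range (k + 1), |a i|) * (r j : ℤ) := by
  calc |∑ i ∈ Finset.range k', a i * (r (m + i) : ℤ)|
      ≤ ∑ i ∈ Finset.range k', |a i * (r (m + i) : ℤ)| := Finset.abs_sum_le_sum_abs _ _
    _ ≤ ∑ i ∈ Finset.range k', |a i| * (r j : ℤ) := by
        refine Finset.sum_le_sum fun i hi => ?_
        rw [abs_mul, abs_of_nonneg (by positivity : (0:ℤ) ≤ (r (m + i) : ℤ))]
        refine mul_le_mul_of_nonneg_left ?_ (abs_nonneg _)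
        exact_mod_cast hmono.monotone (hj i (Finset.mem_range.mp hi))
    _ ≤ (∑ i ∈ Finset.range (k + 1), |a i|) * (r j : ℤ) := by
        rw [← Finset.sum_mul]
        refine mul_le_mul_of_nonneg_right ?_ (Int.natCast_nonneg _)
        exact Finset.sum_le_sum_of_subset_of_nonneg
          (Finset.range_subset_range.2 (by omega)) (fun i _ _ => abs_nonneg _)

end SparseAux

open SparseAux

theorem eventually_geometric_growth (r : ℕ → ℕ) (hmono : StrictMono r) (hsparse : IsSparse r)
    (a : ℕ → ℤ) (k : ℕ) (hpos : ∀ᶠ n in atTop, 0 < opApp a k r n) :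
    ∃ q : ℚ, 1 < q ∧
      (∀ᶠ n in atTop, q * (opApp a k r n : ℚ) < (opApp a k r (n + 1) : ℚ)) ∧
      (∀ᶠ n in atTop, opApp a k r n < opApp a k r (n + 1)) := by
  classical
  have hrge : ∀ n : ℕ, (n : ℤ) ≤ (r n : ℤ) := fun n => by exact_mod_cast hmono.le_apply
  have hr0 : ∀ n : ℕ, (0:ℤ) ≤ (r n : ℤ) := fun n => by positivity
  have hr1 : ∀ n : ℕ, 1 ≤ n → (1:ℤ) ≤ (r n : ℤ) := fun n hn =>
    le_trans (by exact_mod_cast hn) (hrge n)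
  suffices hmain : ∃ N : ℕ, 1 ≤ N ∧
      ∀ᶠ n in atTop, ((N:ℤ) + 1) * opApp a k r n ≤ (N:ℤ) * opApp a k r (n + 1) by
    obtain ⟨N, hN1, hNev⟩ := hmain
    have hNQ : (1:ℚ) ≤ (N:ℚ) := by exact_mod_cast hN1
    have hNQ0 : (0:ℚ) < 2 * (N:ℚ) := by linarith
    refine ⟨1 + 1 / (2 * (N:ℚ)), by nlinarith [one_div_pos.mpr hNQ0], ?_, ?_⟩
    · filter_upwards [hNev, hpos] with n h1 h2
      have h1q : ((N:ℚ) + 1) * (opApp a k r n : ℚ) ≤ (N:ℚ) * (opApp a k r (n+1) : ℚ) := by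
        exact_mod_cast h1
      have h2q : (0:ℚ) < (opApp a k r n : ℚ) := by exact_mod_cast h2
      have hne : (2 * (N:ℚ)) ≠ 0 := ne_of_gt hNQ0
      rw [show (1 + 1/(2*(N:ℚ))) * (opApp a k r n : ℚ)
          = ((2*(N:ℚ)+1) * (opApp a k r n : ℚ)) / (2*(N:ℚ)) by field_simp]
      rw [div_lt_iff₀ hNQ0]
      nlinarith
    · filter_upwards [hNev, hpos] with n h1 h2
      have hNz : (0:ℤ) < (N:ℤ) := by exact_mod_cast hN1
      have hlt : (N:ℤ) * opApp a k r n < (N:ℤ) * opApp a k r (n+1) := by linarith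
      exact lt_of_mul_lt_mul_left hlt (le_of_lt hNz)
  by_contra hcon
  push_neg at hcon
  have hneg : ∀ N : ℕ, 1 ≤ N →
      ∀ᶠ n in atTop, (N:ℤ) * opApp a k r (n+1) < ((N:ℤ)+1) * opApp a k r n := by
    intro N hN
    rcases (hsparse (fun i => (N:ℤ) * sh a i - ((N:ℤ)+1) * pad a k i) (k+1)).1 with h | h | h
    · exact absurd (Eventually.of_forall fun n => by
        have h1 := h n; rw [comb_app] at h1; linarith) (hcon N hN)
    · exact absurd (by
        filter_upwards [h] with n hn
        rw [comb_app] at hn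
        linarith : ∀ᶠ n in atTop, ((N:ℤ)+1) * opApp a k r n ≤ (N:ℤ) * opApp a k r (n+1))
        (fun h' => hcon N hN (h'.mono fun n hn => not_lt.mpr hn))
    · filter_upwards [h] with n hn
      rw [comb_app] at hn
      linarith
  set M : ℤ := ∑ i ∈ Finset.range (k + 1), |a i| with hM
  have hM0 : 0 ≤ M := Finset.sum_nonneg fun i _ => abs_nonneg _
  -- Step A : the difference operator is eventually positive
  have hCval : ∀ n, opApp (fun i => (1:ℤ) * sh a i - (1:ℤ) * pad a k i) (k+1) r n
      = opApp a k r (n+1) - opApp a k r n := fun n => by rw [comb_app]; ring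
  have hCtri := hsparse (fun i => (1:ℤ) * sh a i - (1:ℤ) * pad a k i) (k+1)
  have hCpos : ∀ᶠ n in atTop, 0 < opApp a k r (n+1) - opApp a k r n := by
    rcases hCtri.1 with h | h | h
    · exfalso
      have hconst : ∀ n, opApp a k r n = opApp a k r 0 := by
        intro n
        induction n with
        | zero => rfl
        | succ m ih =>
          have h1 := h m
          rw [hCval] at h1
          linarith
      obtain ⟨Δ₀, hΔ₀⟩ := (hsparse a k).2 hpos
      have h1 := hΔ₀ ((opApp a k r 0).toNat)
      rw [hconst ((opApp a k r 0).toNat + Δ₀)] at h1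
      have h2 := hrge ((opApp a k r 0).toNat)
      have h3 := Int.self_le_toNat (opApp a k r 0)
      linarith
    · filter_upwards [h] with n hn
      rw [hCval] at hn
      exact hn
    · exfalso
      obtain ⟨n₀, hn₀⟩ := eventually_atTop.mp (h.and hpos)
      have hdec : ∀ t : ℕ, opApp a k r (n₀ + t) ≤ opApp a k r n₀ - (t:ℤ) := by
        intro t
        induction t with
        | zero => simp
        | succ m ih =>
          have h1 := (hn₀ (n₀ + m) (by omega)).1
          rw [hCval] at h1
          have h2 : opApp a k r (n₀ + m + 1) + 1 ≤ opApp a k r (n₀ + m) :=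
            Int.lt_iff_add_one_le.mp (by linarith)
          rw [show n₀ + (m+1) = n₀ + m + 1 by omega]
          push_cast
          linarith
      have h2 := (hn₀ (n₀ + ((opApp a k r n₀).toNat + 1)) (by omega)).2
      have h3 := hdec ((opApp a k r n₀).toNat + 1)
      have h4 := Int.self_le_toNat (opApp a k r n₀)
      push_cast at h3
      linarith
  obtain ⟨Δ, hΔ⟩ := hCtri.2 (by
    filter_upwards [hCpos] with n hn
    rw [hCval]
    exact hn)
  have hΔ' : ∀ n, (r n : ℤ) < opApp a k r (n + Δ + 1) - opApp a k r (n + Δ) := by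
    intro n
    have h1 := hΔ n
    rw [hCval] at h1
    exact h1
  -- Step B : super-geometric growth of r in window 1
  have hB : ∀ c : ℕ, ∀ᶠ n in atTop, (c:ℤ) * r n < r (n+1) := by
    intro c
    have huval : ∀ n, opApp (fun i => if i = 0 then -(c:ℤ) else if i = 1 then 1 else 0) 1 r n
        = (r (n+1):ℤ) - (c:ℤ) * r n := by
      intro n
      simp [opApp, Finset.sum_range_succ]
      ring
    have hfalse : (∀ᶠ n in atTop, (r (n+1):ℤ) ≤ (c:ℤ) * r n) → False := by
      intro hle
      obtain ⟨n₁, hn₁⟩ := eventually_atTop.mp hle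
      have hpow : ∀ n, n₁ ≤ n → ∀ t : ℕ, (r (n + t) : ℤ) ≤ (c:ℤ)^t * r n := by
        intro n hn t
        induction t with
        | zero => simp
        | succ m ih =>
          calc (r (n + (m+1)) : ℤ) = (r ((n+m)+1) : ℤ) := by rw [show n+(m+1) = n+m+1 by omega]
            _ ≤ (c:ℤ) * r (n + m) := hn₁ (n + m) (by omega)
            _ ≤ (c:ℤ) * ((c:ℤ)^m * r n) := mul_le_mul_of_nonneg_left ih (by positivity)
            _ = (c:ℤ)^(m+1) * r n := by ring
      set w := k + 1 + Δ with hw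
      set N : ℕ := (M * (c:ℤ)^w).toNat + 1 with hN
      have hNbig : M * (c:ℤ)^w + 1 ≤ (N:ℤ) := by
        have h1 := Int.self_le_toNat (M * (c:ℤ)^w)
        push_cast [hN]
        linarith
      have hNge1 : (1:ℤ) ≤ (N:ℤ) := by omega
      obtain ⟨n₂, hn₂⟩ := eventually_atTop.mp (hneg N (by omega))
      set p := n₁ + n₂ + 1 with hp
      have h1 : (r p : ℤ) + 1 ≤ opApp a k r (p + Δ + 1) - opApp a k r (p + Δ) :=
        Int.lt_iff_add_one_le.mp (hΔ' p)
      have h2 := hn₂ (p + Δ) (by omega)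
      rw [show p + Δ + 1 = (p + Δ) + 1 from rfl] at h1
      have h3 := opApp_le_bound a k r hmono (p + Δ)
      rw [← hM] at h3
      have h4 : (r (p + Δ + k) : ℤ) ≤ (c:ℤ)^w * r p := by
        have hmle : (r (p + Δ + k) : ℤ) ≤ (r (p + w) : ℤ) := by
          exact_mod_cast hmono.monotone (by omega)
        exact hmle.trans (hpow p (by omega) w)
      have h5 : (1:ℤ) ≤ r p := hr1 p (by omega)
      have e1 : (N:ℤ) * ((r p : ℤ) + 1)
          ≤ (N:ℤ) * (opApp a k r (p + Δ + 1) - opApp a k r (p + Δ)) :=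
        mul_le_mul_of_nonneg_left h1 (by positivity)
      have e2 : M * ((r (p+Δ+k)) : ℤ) ≤ M * ((c:ℤ)^w * r p) :=
        mul_le_mul_of_nonneg_left h4 hM0
      have e3 : (M * (c:ℤ)^w) * r p ≤ ((N:ℤ) - 1) * r p :=
        mul_le_mul_of_nonneg_right (by linarith) (hr0 p)
      nlinarith [e1, e2, e3, h2, h3, h5]
    rcases (hsparse (fun i => if i = 0 then -(c:ℤ) else if i = 1 then 1 else 0) 1).1
      with h | h | h
    · exact (hfalse (Eventually.of_forall fun n => by
        have h1 := h n; rw [huval] at h1; linarith)).elim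
    · filter_upwards [h] with n hn
      rw [huval] at hn
      linarith
    · exact (hfalse (by
        filter_upwards [h] with n hn
        rw [huval] at hn
        linarith)).elim
  -- leading coefficient
  have hex : ∃ i, i ≤ k ∧ a i ≠ 0 := by
    by_contra h
    push_neg at h
    obtain ⟨n, hn⟩ := hpos.exists
    have hz : opApp a k r n = 0 := Finset.sum_eq_zero fun i hi => by
      rw [h i (by simpa [Nat.lt_succ_iff] using hi)]
      ring
    rw [hz] at hn
    exact lt_irrefl _ hn
  obtain ⟨i₀, hi₀k, hi₀⟩ := hex
  set k' := Nat.findGreatest (fun i => a i ≠ 0) k with hk'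
  have hk'le : k' ≤ k := Nat.findGreatest_le k
  have hak' : a k' ≠ 0 := Nat.findGreatest_spec (P := fun i => a i ≠ 0) hi₀k hi₀
  have hzero : ∀ i, k' < i → i ≤ k → a i = 0 := by
    intro i h1 h2
    by_contra h
    exact absurd (Nat.le_findGreatest (P := fun i => a i ≠ 0) h2 h) (by omega)
  have htrunc : ∀ n, opApp a k r n = opApp a k' r n := by
    intro n
    unfold opApp
    rw [← Finset.sum_subset (Finset.range_subset_range.2 (by omega : k' + 1 ≤ k + 1))]
    intro i hi hni
    simp only [Finset.mem_range] at hi hni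
    rw [hzero i (by omega) (by omega)]
    ring
  have hdecomp : ∀ n, opApp a k' r n
      = (∑ i ∈ Finset.range k', a i * (r (n+i):ℤ)) + a k' * r (n + k') :=
    fun n => Finset.sum_range_succ _ _
  have hbound' : ∀ n, opApp a k' r n ≤ M * r (n + k') := by
    intro n
    refine (opApp_le_bound a k' r hmono n).trans ?_
    refine mul_le_mul_of_nonneg_right ?_ (hr0 _)
    rw [hM]
    exact Finset.sum_le_sum_of_subset_of_nonneg
      (Finset.range_subset_range.2 (by omega)) (fun i _ _ => abs_nonneg _)
  -- Step C : leading coefficient is positive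
  have hak'pos : 1 ≤ a k' := by
    rcases lt_or_gt_of_ne hak' with hlt | hgt
    swap
    · omega
    exfalso
    set c : ℕ := M.toNat + 1 with hc
    have hcM : M + 1 ≤ (c:ℤ) := by
      have := Int.self_le_toNat M
      push_cast [hc]
      linarith
    obtain ⟨n₃, hn₃⟩ := eventually_atTop.mp (hB c)
    obtain ⟨n₄, hn₄⟩ := eventually_atTop.mp hpos
    set p := n₃ + n₄ + 1 with hp
    have hApos := hn₄ p (by omega)
    rw [htrunc, hdecomp] at hApos
    have hlead : a k' * (r (p + k') : ℤ) ≤ -1 * (r (p + k') : ℤ) :=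
      mul_le_mul_of_nonneg_right (by omega) (hr0 _)
    rcases Nat.eq_zero_or_pos k' with hk0 | hk1
    · have hS : (∑ i ∈ Finset.range k', a i * (r (p+i):ℤ)) = 0 := by
        rw [hk0]
        simp
      have h1 := hr1 (p + k') (by omega)
      rw [hS] at hApos
      linarith
    · have hS := abs_partial_bound a k r hmono k' p (p + k' - 1) (fun i hi => by omega) hk'le
      rw [← hM] at hS
      have habs := (abs_le.mp hS).2
      have hgrow := hn₃ (p + k' - 1) (by omega)
      rw [show (p + k' - 1) + 1 = p + k' by omega] at hgrow
      have e : (M+1) * (r (p + k' - 1) : ℤ) ≤ (c:ℤ) * (r (p + k' - 1) : ℤ) :=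
        mul_le_mul_of_nonneg_right hcM (hr0 _)
      have h0 := hr0 (p + k' - 1)
      nlinarith [hApos, habs, hgrow, e, hlead, h0]
  -- Step D : final contradiction
  set c₃ : ℕ := (3*M).toNat + 1 with hc₃
  have hc₃M : 3*M + 1 ≤ (c₃:ℤ) := by
    have := Int.self_le_toNat (3*M)
    push_cast [hc₃]
    linarith
  obtain ⟨n₅, hn₅⟩ := eventually_atTop.mp (hneg 1 le_rfl)
  obtain ⟨n₆, hn₆⟩ := eventually_atTop.mp (hB c₃)
  set p := n₅ + n₆ + 1 with hp
  have h2 := hn₅ p (by omega)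
  push_cast at h2
  rw [htrunc (p+1), htrunc p, hdecomp (p+1)] at h2
  have hS' := abs_partial_bound a k r hmono k' (p+1) (p + k') (fun i hi => by omega) hk'le
  rw [← hM] at hS'
  have habs := (abs_le.mp hS').1
  have hgrow := hn₆ (p + k') (by omega)
  rw [show p + k' + 1 = p + 1 + k' by omega] at hgrow
  have hAp := hbound' p
  have hlead : (r (p+1+k') : ℤ) ≤ a k' * (r (p+1+k') : ℤ) :=
    le_mul_of_one_le_left (hr0 _) hak'pos
  have hrpk : (1:ℤ) ≤ r (p + k') := hr1 _ (by omega)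
  have e : (3*M+1) * (r (p + k') : ℤ) ≤ (c₃:ℤ) * (r (p + k') : ℤ) :=
    mul_le_mul_of_nonneg_right hc₃M (hr0 _)
  linarith
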